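/- Let s ≥ 2, t ≥ 2, and 0 ≤ k ≤ s − 2 be integers, and let G(A,B) be a bipartite graph with (finite) parts A and B. Suppose that G contains no copy of K_{s,t} with a vertex class of size s contained in A and a vertex class of size t contained in B; that is, there are no sets S ⊆ A with |S| = s and T ⊆ B with |T| = t such that every vertex of S is adjacent to every vertex of T. Then the number of edges of G is at most (s − k − 1)^(1/t) · |B| · |A|^(1 − 1/t) + (t − 1) · |A|^(1 + k/t) + k·|B|. -/

import Mathlib

open Finset

private lemma zar_pow_le_descFactorial (ν t : ℕ) : (ν - (t-1))^t ≤ ν.descFactorial t := by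
  rw [Nat.descFactorial_eq_prod_range]
  calc (ν - (t-1))^t = ∏ _i ∈ Finset.range t, (ν - (t-1)) := by
        rw [Finset.prod_const, Finset.card_range]
    _ ≤ ∏ i ∈ Finset.range t, (ν - i) := by
        refine Finset.prod_le_prod' fun i hi => ?_
        have : i ≤ t - 1 := by have := Finset.mem_range.1 hi; omega
        exact Nat.sub_le_sub_left this ν

private lemma zar_pointwise (dd k q : ℕ) (Q₀ : ℝ) (hQ₀ : 1 ≤ Q₀)
    (hq1 : (k : ℝ) + Q₀ ≤ (q : ℝ)) (hq2 : (q : ℝ) ≤ (k : ℝ) + Q₀ + 1) :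
    ((dd : ℝ) - ((k : ℝ) + Q₀)) * (q.choose k : ℝ)
      ≤ (((dd - k) * (dd.choose k) : ℕ) : ℝ) - Q₀ * (dd.choose k : ℝ) := by
  rcases le_or_gt k dd with hkd | hkd
  · have hcast : (((dd - k) * (dd.choose k) : ℕ) : ℝ)
        = ((dd:ℝ) - (k:ℝ)) * (dd.choose k : ℝ) := by
      push_cast [Nat.cast_sub hkd]; ring
    rw [hcast, show ((dd:ℝ) - (k:ℝ)) * (dd.choose k : ℝ) - Q₀ * (dd.choose k : ℝ)
        = ((dd:ℝ) - ((k:ℝ) + Q₀)) * (dd.choose k : ℝ) by ring]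
    rcases le_or_gt q dd with hqd | hqd
    · have h1 : (q.choose k : ℝ) ≤ (dd.choose k : ℝ) := by
        exact_mod_cast Nat.choose_le_choose k hqd
      have h2 : 0 ≤ (dd:ℝ) - ((k:ℝ) + Q₀) := by
        have : (q:ℝ) ≤ (dd:ℝ) := by exact_mod_cast hqd
        linarith
      exact mul_le_mul_of_nonneg_left h1 h2
    · have h1 : (dd.choose k : ℝ) ≤ (q.choose k : ℝ) := by
        exact_mod_cast Nat.choose_le_choose k hqd.le
      have h2 : (dd:ℝ) - ((k:ℝ) + Q₀) ≤ 0 := by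
        have : (dd:ℝ) + 1 ≤ (q:ℝ) := by exact_mod_cast hqd
        linarith
      exact mul_le_mul_of_nonpos_left h1 h2
  · have h0 : dd.choose k = 0 := Nat.choose_eq_zero_of_lt hkd
    have h0' : dd - k = 0 := by omega
    rw [h0, h0']
    have h2 : (dd:ℝ) - ((k:ℝ) + Q₀) ≤ 0 := by
      have : (dd:ℝ) ≤ (k:ℝ) := by exact_mod_cast hkd.le
      linarith
    have h3 : (0:ℝ) ≤ (q.choose k : ℝ) := Nat.cast_nonneg _
    have h4 : ((dd:ℝ) - ((k:ℝ) + Q₀)) * (q.choose k : ℝ) ≤ 0 :=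
      mul_nonpos_iff.2 (Or.inr ⟨h2, h3⟩)
    push_cast
    linarith

private lemma zar_choose_bound (m k q t : ℕ) (v : ℝ) (hv1 : 1 ≤ v) (ht : 1 ≤ t)
    (hkm : k ≤ m) (hvt : v ^ t = ((m - k : ℕ) : ℝ))
    (hq : (k : ℝ) + v ^ (t-1) ≤ (q : ℝ)) :
    (m.choose k : ℝ) ≤ v ^ k * (q.choose k : ℝ) := by
  have hv0 : (0:ℝ) ≤ v := le_trans zero_le_one hv1
  have hvt1 : (0:ℝ) ≤ v ^ (t-1) := pow_nonneg hv0 _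
  have hkq : k ≤ q := by
    have : (k:ℝ) ≤ (q:ℝ) := by linarith
    exact_mod_cast this
  have hfac : (0:ℝ) < (Nat.factorial k : ℝ) := by exact_mod_cast Nat.factorial_pos k
  have key : ((m.descFactorial k : ℕ):ℝ) ≤ v ^ k * ((q.descFactorial k : ℕ):ℝ) := by
    rw [Nat.descFactorial_eq_prod_range, Nat.descFactorial_eq_prod_range]
    push_cast
    calc ∏ i ∈ Finset.range k, ((m - i : ℕ):ℝ)
        ≤ ∏ i ∈ Finset.range k, (v * ((q - i : ℕ):ℝ)) := by
          refine Finset.prod_le_prod (fun i _ => Nat.cast_nonneg _) fun i hi => ?_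
          have hik : i < k := Finset.mem_range.1 hi
          have him : i ≤ m := le_trans hik.le hkm
          have hiq : i ≤ q := le_trans hik.le hkq
          rw [Nat.cast_sub him, Nat.cast_sub hiq]
          have hMc : ((m:ℝ) - (k:ℝ)) = v ^ t := by
            rw [hvt, Nat.cast_sub hkm]
          have hvv : v * v ^ (t-1) = v ^ t := by
            rw [← pow_succ']
            congr 1
            omega
          have h1 : (m:ℝ) - (i:ℝ) = v ^ t + ((k:ℝ) - (i:ℝ)) := by linarith
          have h2 : (k:ℝ) - (i:ℝ) ≤ v * ((k:ℝ) - (i:ℝ)) := by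
            have hki : (0:ℝ) ≤ (k:ℝ) - (i:ℝ) := by
              have : (i:ℝ) ≤ (k:ℝ) := by exact_mod_cast hik.le
              linarith
            nlinarith
          have h3 : v * ((k:ℝ) + v ^ (t-1) - (i:ℝ)) ≤ v * ((q:ℝ) - (i:ℝ)) := by
            apply mul_le_mul_of_nonneg_left _ hv0
            linarith
          calc (m:ℝ) - (i:ℝ) = v ^ t + ((k:ℝ) - (i:ℝ)) := h1
            _ ≤ v * v ^ (t-1) + v * ((k:ℝ) - (i:ℝ)) := by rw [hvv]; linarith
            _ = v * ((k:ℝ) + v ^ (t-1) - (i:ℝ)) := by ring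
            _ ≤ v * ((q:ℝ) - (i:ℝ)) := h3
      _ = v ^ k * ∏ i ∈ Finset.range k, ((q - i : ℕ):ℝ) := by
          rw [Finset.prod_mul_distrib, Finset.prod_const, Finset.card_range]
  rw [Nat.descFactorial_eq_factorial_mul_choose, Nat.descFactorial_eq_factorial_mul_choose] at key
  push_cast at key
  have := mul_le_mul_of_nonneg_left key (le_of_lt (inv_pos.2 hfac))
  rw [show (Nat.factorial k : ℝ)⁻¹ * ((Nat.factorial k : ℝ) * (m.choose k : ℝ)) = (m.choose k : ℝ) by
        field_simp] at this
  rw [show (Nat.factorial k : ℝ)⁻¹ * (v ^ k * ((Nat.factorial k : ℝ) * (q.choose k : ℝ))) = v ^ k * (q.choose k : ℝ) by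
        field_simp] at this
  exact this

set_option maxHeartbeats 1000000 in
/-- **Theorem 3 (bipartite form of the Zarankiewicz bound).**
Let `s ≥ 2`, `t ≥ 2`, `0 ≤ k ≤ s - 2`, and let `G(A,B)` be a bipartite graph with
parts `A` (type `α`) and `B` (type `β`), encoded by the relation `r`. If `G` contains
no copy of `K_{s,t}` with a class of size `s` in `A` and a class of size `t` in `B`,
then `G` has at most `(s-k-1)^(1/t) |B| |A|^(1-1/t) + (t-1) |A|^(1+k/t) + k |B|` edges. -/
theorem zarankiewicz_bipartite_bound
    {α β : Type*} [Fintype α] [Fintype β]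
    (s t k : ℕ) (hs : 2 ≤ s) (ht : 2 ≤ t) (hk : k ≤ s - 2)
    (r : α → β → Prop) [∀ a b, Decidable (r a b)]
    [DecidablePred fun p : α × β => r p.1 p.2]
    (hfree : ¬ ∃ (S : Finset α) (T : Finset β),
        S.card = s ∧ T.card = t ∧ ∀ a ∈ S, ∀ b ∈ T, r a b) :
    ((Finset.univ.filter fun p : α × β => r p.1 p.2).card : ℝ) ≤
      ((s : ℝ) - k - 1) ^ ((1 : ℝ) / t) * (Fintype.card β)
          * (Fintype.card α : ℝ) ^ (1 - (1 : ℝ) / t)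
        + ((t : ℝ) - 1) * (Fintype.card α : ℝ) ^ (1 + (k : ℝ) / t)
        + k * (Fintype.card β) := by
  classical
  have hks : k + 2 ≤ s := by omega
  set m := Fintype.card α with hm
  set n := Fintype.card β with hn
  set d : β → ℕ := fun b => (univ.filter fun a => r a b).card with hd
  -- edge count as sum of B-degrees
  have hdb : ∀ b : β, d b = ∑ a : α, if r a b then 1 else 0 := fun b => Finset.card_filter _ _
  have hE : (univ.filter fun p : α × β => r p.1 p.2).card = ∑ b, d b := by
    rw [Finset.card_filter, Fintype.sum_prod_type, Finset.sum_comm]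
    refine Finset.sum_congr rfl fun b _ => ?_
    rw [hdb b]
    exact Finset.sum_congr rfl fun x _ => by congr 1
  -- nonnegativity of RHS pieces
  have htR : (0:ℝ) < (t:ℝ) := by positivity
  have htne : (t:ℝ) ≠ 0 := ne_of_gt htR
  have hsk1 : (1:ℝ) ≤ (s:ℝ) - (k:ℝ) - 1 := by
    have : ((k:ℝ) + 2) ≤ (s:ℝ) := by exact_mod_cast hks
    linarith
  have hT1 : (0:ℝ) ≤ ((s : ℝ) - k - 1) ^ ((1 : ℝ) / t) * (n:ℝ)
      * (m : ℝ) ^ (1 - (1 : ℝ) / t) := by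
    apply mul_nonneg (mul_nonneg (Real.rpow_nonneg (by linarith) _) (Nat.cast_nonneg _))
    exact Real.rpow_nonneg (Nat.cast_nonneg _) _
  have hT2 : (0:ℝ) ≤ ((t : ℝ) - 1) * (m : ℝ) ^ (1 + (k : ℝ) / t) := by
    apply mul_nonneg _ (Real.rpow_nonneg (Nat.cast_nonneg _) _)
    have : (2:ℝ) ≤ (t:ℝ) := by exact_mod_cast ht
    linarith
  rcases lt_or_ge m (k+1) with hmk | hmk
  · -- degenerate case m ≤ k
    have hEb : (∑ b, d b) ≤ n * k := by
      calc ∑ b, d b ≤ ∑ _b : β, k := by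
            refine Finset.sum_le_sum fun b _ => ?_
            calc d b ≤ m := by
                  simpa [hm, Finset.card_univ] using Finset.card_filter_le univ (fun a => r a b)
              _ ≤ k := by omega
        _ = n * k := by rw [Finset.sum_const, Finset.card_univ, smul_eq_mul]
    rw [hE]
    have : ((∑ b, d b : ℕ):ℝ) ≤ (k:ℝ) * (n:ℝ) := by
      have := hEb
      have hcast : ((∑ b, d b : ℕ):ℝ) ≤ ((n * k : ℕ):ℝ) := by exact_mod_cast this
      rw [Nat.cast_mul] at hcast
      linarith
    linarith
  · -- main case : k + 1 ≤ m
    -- real-power setup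
    have hpow : ∀ x:ℝ, 0 ≤ x → (x ^ ((1:ℝ)/t)) ^ t = x := by
      intro x hx
      rw [← Real.rpow_natCast (x ^ ((1:ℝ)/t)) t, ← Real.rpow_mul hx,
        one_div_mul_cancel htne, Real.rpow_one]
    have hone : ∀ x:ℝ, 0 ≤ x → (1:ℝ) ≤ x ^ t → 1 ≤ x := by
      intro x hx hxt
      by_contra hlt
      push_neg at hlt
      have := pow_lt_one₀ hx hlt (by omega : t ≠ 0)
      linarith
    set u := (m:ℝ) ^ ((1:ℝ)/t) with hu
    set v := ((m - k : ℕ):ℝ) ^ ((1:ℝ)/t) with hv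
    set w := ((s - (k+1) : ℕ):ℝ) ^ ((1:ℝ)/t) with hw
    have hu0 : (0:ℝ) ≤ u := Real.rpow_nonneg (Nat.cast_nonneg _) _
    have hv0 : (0:ℝ) ≤ v := Real.rpow_nonneg (Nat.cast_nonneg _) _
    have hw0 : (0:ℝ) ≤ w := Real.rpow_nonneg (Nat.cast_nonneg _) _
    have hut : u ^ t = (m:ℝ) := hpow _ (Nat.cast_nonneg _)
    have hvt : v ^ t = ((m - k : ℕ):ℝ) := hpow _ (Nat.cast_nonneg _)
    have hwt : w ^ t = ((s - (k+1) : ℕ):ℝ) := hpow _ (Nat.cast_nonneg _)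
    have hv1 : (1:ℝ) ≤ v := by
      apply hone _ hv0
      rw [hvt]
      have : 1 ≤ m - k := by omega
      exact_mod_cast this
    have hw1 : (1:ℝ) ≤ w := by
      apply hone _ hw0
      rw [hwt]
      have : 1 ≤ s - (k+1) := by omega
      exact_mod_cast this
    have hvu : v ≤ u := by
      apply le_of_pow_le_pow_left₀ (by omega : t ≠ 0) hu0
      rw [hut, hvt]
      have : m - k ≤ m := by omega
      exact_mod_cast this
    have hvt1 : (1:ℝ) ≤ v ^ (t-1) := by
      calc (1:ℝ) = 1 ^ (t-1) := (one_pow _).symm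
        _ ≤ v ^ (t-1) := pow_le_pow_left₀ zero_le_one hv1 _
    set Q₀ := w * v ^ (t-1) with hQ₀def
    have hQ₀1 : (1:ℝ) ≤ Q₀ := by
      calc (1:ℝ) = 1 * 1 := (one_mul 1).symm
        _ ≤ w * v ^ (t-1) := mul_le_mul hw1 hvt1 zero_le_one hw0
    have hQ₀0 : (0:ℝ) ≤ Q₀ := le_trans zero_le_one hQ₀1
    set q := Nat.ceil ((k:ℝ) + Q₀) with hq
    have hq1 : (k:ℝ) + Q₀ ≤ (q:ℝ) := Nat.le_ceil _
    have hq2 : (q:ℝ) ≤ (k:ℝ) + Q₀ + 1 := (Nat.ceil_lt_add_one (by positivity)).le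
    have hkq : k + 1 ≤ q := by
      have : ((k:ℝ) + 1) ≤ (q:ℝ) := by linarith
      exact_mod_cast this
    have hCq : 0 < q.choose k := Nat.choose_pos (by omega)
    -- per-K structures
    set MK : Finset α → Finset β := fun K => univ.filter fun b => ∀ a ∈ K, r a b with hMK
    set FF : Finset α → α → Finset β := fun K a => (MK K).filter fun b => r a b with hFF
    set 𝒦 := (univ : Finset α).powersetCard k with h𝒦
    -- Lemma B : common neighborhoods of t-subsets of MK are small
    have hB : ∀ K : Finset α, K.card = k → ∀ T : Finset β, T ⊆ MK K → T.card = t →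
        ((univ \ K).filter fun a => T ⊆ FF K a).card ≤ s - (k+1) := by
      intro K hK T hTsub hTcard
      by_contra hcon
      push_neg at hcon
      obtain ⟨S', hS'sub, hS'card⟩ :=
        Finset.exists_subset_card_eq (show s - k ≤ ((univ \ K).filter fun a => T ⊆ FF K a).card by omega)
      refine hfree ⟨K ∪ S', T, ?_, hTcard, ?_⟩
      · have hdisj : Disjoint K S' := by
          rw [Finset.disjoint_left]
          intro a haK haS'
          have := hS'sub haS'
          simp only [Finset.mem_filter, Finset.mem_sdiff] at this
          exact this.1.2 haK
        rw [Finset.card_union_of_disjoint hdisj, hK, hS'card]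
        omega
      · intro a ha b hb
        rcases Finset.mem_union.1 ha with h | h
        · have := hTsub hb
          simp only [hMK, Finset.mem_filter] at this
          exact this.2 a h
        · have := hS'sub h
          simp only [Finset.mem_filter] at this
          have hbF := this.2 hb
          simp only [hFF, hMK, Finset.mem_filter] at hbF
          exact hbF.2
    -- Lemma A : counting K_{s-k, t}-freeness
    have hA : ∀ K : Finset α, K.card = k →
        ∑ a ∈ univ \ K, ((FF K a).card).choose t
          ≤ (s - (k+1)) * ((MK K).card).choose t := by
      intro K hK
      have hstep : ∀ a : α, ((FF K a).card).choose t
          = ∑ T ∈ (MK K).powersetCard t, (if T ⊆ FF K a then 1 else 0) := by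
        intro a
        rw [← Finset.card_powersetCard, ← Finset.card_filter]
        congr 1
        ext T
        simp only [Finset.mem_filter, Finset.mem_powersetCard]
        constructor
        · rintro ⟨hTF, hTc⟩
          exact ⟨⟨hTF.trans (Finset.filter_subset _ _), hTc⟩, hTF⟩
        · rintro ⟨⟨_, hTc⟩, hTF⟩
          exact ⟨hTF, hTc⟩
      calc ∑ a ∈ univ \ K, ((FF K a).card).choose t
          = ∑ a ∈ univ \ K, ∑ T ∈ (MK K).powersetCard t, (if T ⊆ FF K a then 1 else 0) :=
            Finset.sum_congr rfl fun a _ => hstep a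
        _ = ∑ T ∈ (MK K).powersetCard t, ∑ a ∈ univ \ K, (if T ⊆ FF K a then 1 else 0) :=
            Finset.sum_comm
        _ ≤ ∑ _T ∈ (MK K).powersetCard t, (s - (k+1)) := by
            refine Finset.sum_le_sum fun T hT => ?_
            have hTm := Finset.mem_powersetCard.1 hT
            rw [← Finset.card_filter]
            exact hB K hK T hTm.1 hTm.2
        _ = ((MK K).card).choose t * (s - (k+1)) := by
            rw [Finset.sum_const, Finset.card_powersetCard, smul_eq_mul]
        _ = (s - (k+1)) * ((MK K).card).choose t := mul_comm _ _
    -- Jensen per K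
    have hJ : ∀ K : Finset α, K.card = k →
        (∑ a ∈ univ \ K, ((FF K a).card : ℝ))
          ≤ ((m - k : ℕ) : ℝ) * ((t:ℝ) - 1) + Q₀ * ((MK K).card : ℝ) := by
      intro K hK
      have hcardKc : (univ \ K).card = m - k := by
        rw [Finset.card_sdiff_of_subset (Finset.subset_univ K), Finset.card_univ, hK]
      set X : α → ℕ := fun a => (FF K a).card - (t - 1) with hX
      have hXsum : (∑ a ∈ univ \ K, (X a : ℝ)) ≤ Q₀ * ((MK K).card : ℝ) := by
        have hnonneg : ∀ a ∈ univ \ K, (0:ℝ) ≤ (X a : ℝ) := fun a _ => Nat.cast_nonneg _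
        have hpowmean := pow_sum_le_card_mul_sum_pow hnonneg (t-1)
        have htt : t - 1 + 1 = t := by omega
        rw [htt] at hpowmean
        have hNat : (∑ a ∈ univ \ K, X a ^ t) ≤ (s - (k+1)) * ((MK K).card)^t := by
          calc ∑ a ∈ univ \ K, X a ^ t
              ≤ ∑ a ∈ univ \ K, ((FF K a).card).descFactorial t :=
                Finset.sum_le_sum fun a _ => zar_pow_le_descFactorial _ _
            _ = ∑ a ∈ univ \ K, Nat.factorial t * ((FF K a).card).choose t :=
                Finset.sum_congr rfl fun a _ => Nat.descFactorial_eq_factorial_mul_choose _ _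
            _ = Nat.factorial t * ∑ a ∈ univ \ K, ((FF K a).card).choose t := (Finset.mul_sum _ _ _).symm
            _ ≤ Nat.factorial t * ((s - (k+1)) * ((MK K).card).choose t) :=
                Nat.mul_le_mul_left _ (hA K hK)
            _ = (s - (k+1)) * (Nat.factorial t * ((MK K).card).choose t) := by ring
            _ = (s - (k+1)) * ((MK K).card).descFactorial t := by
                rw [Nat.descFactorial_eq_factorial_mul_choose]
            _ ≤ (s - (k+1)) * ((MK K).card)^t :=
                Nat.mul_le_mul_left _ (Nat.descFactorial_le_pow _ _)
        have hfinal_pow : (∑ a ∈ univ \ K, (X a:ℝ))^t ≤ (Q₀ * ((MK K).card:ℝ))^t := by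
          calc (∑ a ∈ univ \ K, (X a:ℝ))^t
              ≤ ((univ \ K).card : ℝ)^(t-1) * ∑ a ∈ univ \ K, (X a:ℝ)^t := hpowmean
            _ ≤ ((m - k:ℕ):ℝ)^(t-1) * (((s - (k+1)) * ((MK K).card)^t : ℕ):ℝ) := by
                rw [hcardKc]
                apply mul_le_mul_of_nonneg_left _ (by positivity)
                calc ∑ a ∈ univ \ K, (X a:ℝ)^t
                    = ((∑ a ∈ univ \ K, X a ^ t : ℕ):ℝ) := by push_cast; rfl
                  _ ≤ _ := by exact_mod_cast hNat
            _ = (v^t)^(t-1) * (w^t * (((MK K).card:ℕ):ℝ)^t) := by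
                rw [hvt, hwt]; push_cast; ring
            _ = (Q₀ * ((MK K).card:ℝ))^t := by
                rw [hQ₀def]; ring
        apply le_of_pow_le_pow_left₀ (by omega : t ≠ 0) _ hfinal_pow
        positivity
      have hpt : ∀ a ∈ univ \ K, ((FF K a).card : ℝ) ≤ ((t:ℝ) - 1) + (X a : ℝ) := by
        intro a _
        have h1 : (FF K a).card ≤ (t-1) + X a := by simp only [hX]; omega
        have h2 : (((t-1) + X a : ℕ):ℝ) = ((t:ℝ) - 1) + (X a:ℝ) := by
          push_cast [Nat.cast_sub (show 1 ≤ t by omega)]; ring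
        calc ((FF K a).card : ℝ) ≤ (((t-1) + X a : ℕ):ℝ) := by exact_mod_cast h1
          _ = _ := h2
      calc (∑ a ∈ univ \ K, ((FF K a).card : ℝ))
          ≤ ∑ a ∈ univ \ K, (((t:ℝ) - 1) + (X a : ℝ)) := Finset.sum_le_sum hpt
        _ = ((univ \ K).card : ℝ) * ((t:ℝ) - 1) + ∑ a ∈ univ \ K, (X a : ℝ) := by
            rw [Finset.sum_add_distrib, Finset.sum_const, nsmul_eq_mul]
        _ ≤ ((m - k : ℕ) : ℝ) * ((t:ℝ) - 1) + Q₀ * ((MK K).card : ℝ) := by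
            rw [hcardKc]
            exact add_le_add_right hXsum _
    -- sum identities
    have hfiltereq : ∀ b : β, (𝒦.filter fun K => ∀ a ∈ K, r a b)
        = (univ.filter fun a => r a b).powersetCard k := by
      intro b
      ext K
      simp only [Finset.mem_filter, Finset.mem_powersetCard, h𝒦]
      constructor
      · rintro ⟨⟨_, hKc⟩, hKr⟩
        refine ⟨fun a haK => ?_, hKc⟩
        simp only [Finset.mem_filter, Finset.mem_univ, true_and]
        exact hKr a haK
      · rintro ⟨hKsub, hKc⟩
        refine ⟨⟨Finset.subset_univ K, hKc⟩, fun a haK => ?_⟩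
        have := hKsub haK
        simp only [Finset.mem_filter] at this
        exact this.2
    have hS2 : ∑ K ∈ 𝒦, ((MK K).card) = ∑ b, (d b).choose k := by
      calc ∑ K ∈ 𝒦, ((MK K).card)
          = ∑ K ∈ 𝒦, ∑ b ∈ univ, (if (∀ a ∈ K, r a b) then 1 else 0) :=
            Finset.sum_congr rfl fun K _ => Finset.card_filter _ _
        _ = ∑ b ∈ univ, ∑ K ∈ 𝒦, (if (∀ a ∈ K, r a b) then 1 else 0) := Finset.sum_comm
        _ = ∑ b, (d b).choose k := by
            refine Finset.sum_congr rfl fun b _ => ?_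
            rw [← Finset.card_filter, hfiltereq b, Finset.card_powersetCard]
    have hS1 : ∑ K ∈ 𝒦, ∑ a ∈ univ \ K, (FF K a).card
        = ∑ b, (d b - k) * (d b).choose k := by
      have h1 : ∀ K a, (FF K a).card
          = ∑ b ∈ univ, (if ((∀ a' ∈ K, r a' b) ∧ r a b) then 1 else 0) := by
        intro K a
        simp only [hFF, hMK]
        rw [Finset.filter_filter]
        exact Finset.card_filter _ _
      calc ∑ K ∈ 𝒦, ∑ a ∈ univ \ K, (FF K a).card
          = ∑ K ∈ 𝒦, ∑ a ∈ univ \ K, ∑ b ∈ univ,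
              (if ((∀ a' ∈ K, r a' b) ∧ r a b) then 1 else 0) :=
            Finset.sum_congr rfl fun K _ => Finset.sum_congr rfl fun a _ => h1 K a
        _ = ∑ K ∈ 𝒦, ∑ b ∈ univ, ∑ a ∈ univ \ K,
              (if ((∀ a' ∈ K, r a' b) ∧ r a b) then 1 else 0) :=
            Finset.sum_congr rfl fun K _ => Finset.sum_comm
        _ = ∑ b ∈ univ, ∑ K ∈ 𝒦, ∑ a ∈ univ \ K,
              (if ((∀ a' ∈ K, r a' b) ∧ r a b) then 1 else 0) := Finset.sum_comm
        _ = ∑ b ∈ univ, ∑ K ∈ 𝒦,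
              (if (∀ a' ∈ K, r a' b) then ((univ \ K).filter fun a => r a b).card else 0) := by
            refine Finset.sum_congr rfl fun b _ => Finset.sum_congr rfl fun K _ => ?_
            by_cases hP : ∀ a' ∈ K, r a' b
            · rw [if_pos hP, Finset.card_filter]
              exact Finset.sum_congr rfl fun a _ => by simp only [and_iff_right hP]
            · rw [if_neg hP]
              exact Finset.sum_eq_zero fun a _ => if_neg fun hc => hP hc.1
        _ = ∑ b ∈ univ, ∑ K ∈ (univ.filter fun a => r a b).powersetCard k,
              ((univ \ K).filter fun a => r a b).card := by
            refine Finset.sum_congr rfl fun b _ => ?_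
            rw [← Finset.sum_filter, hfiltereq b]
        _ = ∑ b ∈ univ, ∑ _K ∈ (univ.filter fun a => r a b).powersetCard k, (d b - k) := by
            refine Finset.sum_congr rfl fun b _ => Finset.sum_congr rfl fun K hK => ?_
            have hKm := Finset.mem_powersetCard.1 hK
            have heq : (univ \ K).filter (fun a => r a b)
                = (univ.filter fun a => r a b) \ K := by
              ext a
              simp only [Finset.mem_filter, Finset.mem_sdiff, Finset.mem_univ, true_and]
              tauto
            rw [heq, Finset.card_sdiff_of_subset hKm.1, hKm.2]
        _ = ∑ b, (d b - k) * (d b).choose k := by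
            refine Finset.sum_congr rfl fun b _ => ?_
            rw [Finset.sum_const, Finset.card_powersetCard, smul_eq_mul, mul_comm]
    -- summed inequality
    have h𝒦card : 𝒦.card = m.choose k := by
      rw [h𝒦, Finset.card_powersetCard, Finset.card_univ]
    have hsum_le : ((∑ b, (d b - k) * (d b).choose k : ℕ) : ℝ)
        ≤ (m.choose k : ℝ) * (((m - k:ℕ):ℝ) * ((t:ℝ)-1))
          + Q₀ * ((∑ b, (d b).choose k : ℕ):ℝ) := by
      rw [← hS1, ← hS2]
      push_cast
      calc ∑ K ∈ 𝒦, ∑ a ∈ univ \ K, ((FF K a).card : ℝ)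
          ≤ ∑ K ∈ 𝒦, (((m - k : ℕ) : ℝ) * ((t:ℝ) - 1) + Q₀ * ((MK K).card : ℝ)) := by
            refine Finset.sum_le_sum fun K hK => ?_
            have hKc : K.card = k := ((Finset.mem_powersetCard.1 hK).2)
            exact hJ K hKc
        _ = 𝒦.card * (((m - k : ℕ) : ℝ) * ((t:ℝ) - 1))
              + Q₀ * ∑ K ∈ 𝒦, ((MK K).card : ℝ) := by
            rw [Finset.sum_add_distrib, Finset.sum_const, nsmul_eq_mul, Finset.mul_sum]
        _ = (m.choose k : ℝ) * (((m - k:ℕ):ℝ) * ((t:ℝ)-1))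
              + Q₀ * ∑ K ∈ 𝒦, ((MK K).card : ℝ) := by rw [h𝒦card]
    -- pointwise inequality summed over b
    have hpt_sum : ((∑ b, d b : ℕ):ℝ) - (n:ℝ) * ((k:ℝ) + Q₀)
        ≤ ((m.choose k : ℝ) * (((m - k:ℕ):ℝ) * ((t:ℝ)-1))) / (q.choose k : ℝ) := by
      have hCqR : (0:ℝ) < (q.choose k : ℝ) := by exact_mod_cast hCq
      rw [le_div_iff₀ hCqR]
      have step1 : (((∑ b, d b : ℕ):ℝ) - (n:ℝ) * ((k:ℝ) + Q₀)) * (q.choose k : ℝ)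
          = ∑ b, (((d b:ℕ):ℝ) - ((k:ℝ) + Q₀)) * (q.choose k : ℝ) := by
        rw [← Finset.sum_mul]
        congr 1
        rw [Finset.sum_sub_distrib, Finset.sum_const, Finset.card_univ, nsmul_eq_mul]
        push_cast
        ring
      rw [step1]
      calc ∑ b, (((d b:ℕ):ℝ) - ((k:ℝ) + Q₀)) * (q.choose k : ℝ)
          ≤ ∑ b, ((((d b - k) * ((d b).choose k) : ℕ) : ℝ) - Q₀ * ((d b).choose k : ℝ)) := by
            refine Finset.sum_le_sum fun b _ => ?_
            exact zar_pointwise (d b) k q Q₀ hQ₀1 hq1 hq2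
        _ = ((∑ b, (d b - k) * (d b).choose k : ℕ):ℝ)
              - Q₀ * ((∑ b, (d b).choose k : ℕ):ℝ) := by
            rw [Finset.sum_sub_distrib]
            push_cast
            rw [Finset.mul_sum]
        _ ≤ (m.choose k : ℝ) * (((m - k:ℕ):ℝ) * ((t:ℝ)-1)) := by linarith
    -- binomial comparison
    have hprod : (m.choose k : ℝ) ≤ v ^ k * (q.choose k : ℝ) := by
      refine zar_choose_bound m k q t v hv1 (by omega) (by omega) hvt ?_
      have : v ^ (t-1) ≤ Q₀ := by
        rw [hQ₀def]
        nlinarith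
      linarith
    have hCqR : (0:ℝ) < (q.choose k : ℝ) := by exact_mod_cast hCq
    have hmain : ((∑ b, d b : ℕ):ℝ)
        ≤ (n:ℝ) * ((k:ℝ) + Q₀) + v ^ k * (((m - k:ℕ):ℝ) * ((t:ℝ)-1)) := by
      have h2 : ((m.choose k : ℝ) * (((m - k:ℕ):ℝ) * ((t:ℝ)-1))) / (q.choose k : ℝ)
          ≤ v ^ k * (((m - k:ℕ):ℝ) * ((t:ℝ)-1)) := by
        rw [div_le_iff₀ hCqR]
        have hnn : (0:ℝ) ≤ ((m - k:ℕ):ℝ) * ((t:ℝ)-1) := by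
          apply mul_nonneg (Nat.cast_nonneg _)
          have : (2:ℝ) ≤ (t:ℝ) := by exact_mod_cast ht
          linarith
        calc (m.choose k : ℝ) * (((m - k:ℕ):ℝ) * ((t:ℝ)-1))
            ≤ (v ^ k * (q.choose k : ℝ)) * (((m - k:ℕ):ℝ) * ((t:ℝ)-1)) :=
              mul_le_mul_of_nonneg_right hprod hnn
          _ = v ^ k * (((m - k:ℕ):ℝ) * ((t:ℝ)-1)) * (q.choose k : ℝ) := by ring
      linarith [hpt_sum]
    -- final comparison with the rpow form
    have hucast : ((m:ℕ):ℝ) ^ ((1:ℝ) - 1/t) = u ^ (t-1) := by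
      rw [hu, ← Real.rpow_natCast ((m:ℝ) ^ ((1:ℝ)/t)) (t-1), ← Real.rpow_mul (Nat.cast_nonneg m)]
      congr 1
      rw [Nat.cast_sub (show 1 ≤ t by omega)]
      field_simp
      simp
    have hucast2 : ((m:ℕ):ℝ) ^ (1 + (k:ℝ)/t) = u ^ (t+k) := by
      rw [hu, ← Real.rpow_natCast ((m:ℝ) ^ ((1:ℝ)/t)) (t+k), ← Real.rpow_mul (Nat.cast_nonneg m)]
      congr 1
      push_cast
      field_simp
    have hwcast : ((s : ℝ) - k - 1) = ((s - (k+1) : ℕ):ℝ) := by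
      rw [Nat.cast_sub (by omega : k + 1 ≤ s)]
      push_cast
      ring
    rw [hE, hwcast, hucast, hucast2]
    -- bound pieces
    have hb1 : (n:ℝ) * Q₀ ≤ w * (n:ℝ) * u ^ (t-1) := by
      rw [hQ₀def]
      have h3 : v ^ (t-1) ≤ u ^ (t-1) := pow_le_pow_left₀ hv0 hvu _
      have hn0 : (0:ℝ) ≤ (n:ℝ) := Nat.cast_nonneg _
      calc (n:ℝ) * (w * v ^ (t-1)) ≤ (n:ℝ) * (w * u ^ (t-1)) := by
            apply mul_le_mul_of_nonneg_left _ hn0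
            exact mul_le_mul_of_nonneg_left h3 hw0
        _ = w * (n:ℝ) * u ^ (t-1) := by ring
    have hb2 : v ^ k * (((m - k:ℕ):ℝ) * ((t:ℝ)-1)) ≤ ((t:ℝ)-1) * u ^ (t+k) := by
      have hmk2 : ((m - k:ℕ):ℝ) ≤ (m:ℝ) := by
        have : m - k ≤ m := by omega
        exact_mod_cast this
      have ht1 : (0:ℝ) ≤ (t:ℝ) - 1 := by
        have : (2:ℝ) ≤ (t:ℝ) := by exact_mod_cast ht
        linarith
      have hvk : v ^ k ≤ u ^ k := pow_le_pow_left₀ hv0 hvu _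
      have h4 : v ^ k * ((m - k:ℕ):ℝ) ≤ u ^ k * (m:ℝ) :=
        mul_le_mul hvk hmk2 (Nat.cast_nonneg _) (pow_nonneg hu0 _)
      calc v ^ k * (((m - k:ℕ):ℝ) * ((t:ℝ)-1)) = (v ^ k * ((m - k:ℕ):ℝ)) * ((t:ℝ)-1) := by ring
        _ ≤ (u ^ k * (m:ℝ)) * ((t:ℝ)-1) := mul_le_mul_of_nonneg_right h4 ht1
        _ = ((t:ℝ)-1) * (u ^ k * u ^ t) := by rw [hut]; ring
        _ = ((t:ℝ)-1) * u ^ (t+k) := by rw [← pow_add]; ring_nf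
    calc ((∑ b, d b : ℕ):ℝ)
        ≤ (n:ℝ) * ((k:ℝ) + Q₀) + v ^ k * (((m - k:ℕ):ℝ) * ((t:ℝ)-1)) := hmain
      _ = (n:ℝ) * Q₀ + v ^ k * (((m - k:ℕ):ℝ) * ((t:ℝ)-1)) + (k:ℝ) * (n:ℝ) := by ring
      _ ≤ w * (n:ℝ) * u ^ (t-1) + ((t:ℝ)-1) * u ^ (t+k) + (k:ℝ) * (n:ℝ) := by
          linarith [hb1, hb2]
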